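/- The k-th derivative in s of g(s,t) = 2λ_P[ |t-a| e^{λ_d β(t)(s-1)} - (t+a) + (e^{λ_d(s-1)β(t)}-1)/(λ_d(s-1)) ] for s ≠ 1 equals 2λ_P[ (λ_d β(t))^k |t-a| e^{(s-1)λ_d β(t)} + (1/λ_d)( Σ_{j=0}^{k} C(k,j) j!(-1)^j (s-1)^{-(j+1)} (λ_d β(t))^{k-j} e^{(s-1)λ_d β(t)} − k!(-1)^k (s-1)^{-(k+1)} ) ]. -/

import Mathlib

open Real

/-- The claimed formula for the `k`-th derivative, with `c = λd β(t)` and `b = |t-a|`. -/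
noncomputable def Fk (lamP lamd c b : ℝ) (k : ℕ) (s : ℝ) : ℝ :=
  2 * lamP * (c ^ k * b * Real.exp ((s - 1) * c)
    + (1 / lamd) *
      ((∑ j ∈ Finset.range (k + 1),
          (Nat.choose k j : ℝ) * (Nat.factorial j : ℝ) * (-1) ^ j / (s - 1) ^ (j + 1)
            * c ^ (k - j) * Real.exp ((s - 1) * c))
        - (Nat.factorial k : ℝ) * (-1) ^ k / (s - 1) ^ (k + 1)))

lemma pascal_sum (d : ℕ → ℝ) (k : ℕ) :
    ∑ j ∈ Finset.range (k + 1), (Nat.choose k j : ℝ) * d j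
      + ∑ j ∈ Finset.range (k + 1), (Nat.choose k j : ℝ) * d (j + 1)
    = ∑ j ∈ Finset.range (k + 2), (Nat.choose (k + 1) j : ℝ) * d j := by
  rw [Finset.sum_range_succ' (fun j => (Nat.choose (k + 1) j : ℝ) * d j) (k + 1),
      Finset.sum_range_succ' (fun j => (Nat.choose k j : ℝ) * d j) k]
  have e2 : ∑ j ∈ Finset.range k, (Nat.choose k (j + 1) : ℝ) * d (j + 1)
      = ∑ j ∈ Finset.range (k + 1), (Nat.choose k (j + 1) : ℝ) * d (j + 1) := by
    rw [Finset.sum_range_succ]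
    simp [Nat.choose_eq_zero_of_lt (Nat.lt_succ_self k)]
  rw [e2]
  have e3 : ∑ j ∈ Finset.range (k + 1), (Nat.choose k (j + 1) : ℝ) * d (j + 1)
        + ∑ j ∈ Finset.range (k + 1), (Nat.choose k j : ℝ) * d (j + 1)
      = ∑ j ∈ Finset.range (k + 1), (Nat.choose (k + 1) (j + 1) : ℝ) * d (j + 1) := by
    rw [← Finset.sum_add_distrib]
    apply Finset.sum_congr rfl
    intro j _
    rw [Nat.choose_succ_succ']
    push_cast
    ring
  simp only [Nat.choose_zero_right, Nat.cast_one]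
  linarith [e3]

lemma exp_hasDeriv (c s : ℝ) :
    HasDerivAt (fun x : ℝ => Real.exp ((x - 1) * c)) (c * Real.exp ((s - 1) * c)) s := by
  have h : HasDerivAt (fun x : ℝ => (x - 1) * c) (1 * c) s :=
    ((hasDerivAt_id s).sub_const 1).mul_const c
  simpa [mul_comm] using h.exp

lemma pow_hasDeriv (n : ℕ) (s : ℝ) :
    HasDerivAt (fun x : ℝ => (x - 1) ^ (n + 1)) ((n + 1) * (s - 1) ^ n) s := by
  have h := ((hasDerivAt_id s).sub_const 1).fun_pow (n + 1)
  simpa using h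

lemma step (lamP lamd c b : ℝ) (k : ℕ) (s : ℝ) (hs : s - 1 ≠ 0) :
    HasDerivAt (Fk lamP lamd c b k) (Fk lamP lamd c b (k + 1) s) s := by
  have hE := exp_hasDeriv c s
  have hne : ∀ n : ℕ, (s - 1) ^ (n + 1) ≠ 0 := fun n => pow_ne_zero _ hs
  set E := Real.exp ((s - 1) * c) with hEdef
  set d : ℕ → ℝ := fun j =>
    (Nat.factorial j : ℝ) * (-1) ^ j / (s - 1) ^ (j + 1) * c ^ (k + 1 - j) * E with hd
  have hterm : ∀ j ∈ Finset.range (k + 1),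
      HasDerivAt (fun x : ℝ =>
        (Nat.choose k j : ℝ) * (Nat.factorial j : ℝ) * (-1) ^ j / (x - 1) ^ (j + 1)
          * c ^ (k - j) * Real.exp ((x - 1) * c))
        ((Nat.choose k j : ℝ) * d j + (Nat.choose k j : ℝ) * d (j + 1)) s := by
    intro j hj
    have hj' : j ≤ k := Nat.lt_succ_iff.mp (Finset.mem_range.mp hj)
    have h := (((hasDerivAt_const s
        ((Nat.choose k j : ℝ) * (Nat.factorial j : ℝ) * (-1) ^ j)).fun_div
        (pow_hasDeriv j s) (hne j)).mul_const (c ^ (k - j))).fun_mul hE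
    convert h using 1
    case e'_4 => rfl
    case e'_5 => rfl
    simp only [hd]
    rw [show k + 1 - j = (k - j) + 1 by omega, show k + 1 - (j + 1) = k - j by omega]
    push_cast [Nat.factorial_succ]
    field_simp
    ring
  have hsum := HasDerivAt.fun_sum hterm
  have hT : HasDerivAt (fun x : ℝ => (Nat.factorial k : ℝ) * (-1) ^ k / (x - 1) ^ (k + 1))
      ((Nat.factorial (k + 1) : ℝ) * (-1) ^ (k + 1) / (s - 1) ^ (k + 1 + 1)) s := by
    have h := (hasDerivAt_const s ((Nat.factorial k : ℝ) * (-1) ^ k)).fun_div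
        (pow_hasDeriv k s) (hne k)
    convert h using 1
    case e'_4 => rfl
    case e'_5 => rfl
    push_cast [Nat.factorial_succ]
    field_simp
    ring
  have hA : HasDerivAt (fun x : ℝ => c ^ k * b * Real.exp ((x - 1) * c))
      (c ^ k * b * (c * E)) s := hE.const_mul (c ^ k * b)
  have hfull := (hA.fun_add (((hsum.fun_sub hT)).const_mul (1 / lamd))).const_mul (2 * lamP)
  have hval : 2 * lamP * (c ^ k * b * (c * E)
      + 1 / lamd * ((∑ j ∈ Finset.range (k + 1),
          ((Nat.choose k j : ℝ) * d j + (Nat.choose k j : ℝ) * d (j + 1)))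
        - (Nat.factorial (k + 1) : ℝ) * (-1) ^ (k + 1) / (s - 1) ^ (k + 1 + 1)))
      = Fk lamP lamd c b (k + 1) s := by
    rw [Finset.sum_add_distrib, pascal_sum]
    simp only [Fk, hd, ← hEdef]
    have : ∑ j ∈ Finset.range (k + 2), (Nat.choose (k + 1) j : ℝ) *
        ((Nat.factorial j : ℝ) * (-1) ^ j / (s - 1) ^ (j + 1) * c ^ (k + 1 - j) * E)
      = ∑ j ∈ Finset.range (k + 1 + 1), (Nat.choose (k + 1) j : ℝ) * (Nat.factorial j : ℝ)
          * (-1) ^ j / (s - 1) ^ (j + 1) * c ^ (k + 1 - j) * E := by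
      apply Finset.sum_congr rfl
      intro j _
      ring
    rw [this]
    ring
  rw [← hval]
  exact hfull

lemma base (lamP lamd c b K : ℝ) (s : ℝ) (hs : s - 1 ≠ 0) (hlam : lamd ≠ 0) :
    HasDerivAt (fun x : ℝ => 2 * lamP * (b * Real.exp ((x - 1) * c) - K
      + (Real.exp ((x - 1) * c) - 1) / (lamd * (x - 1))))
      (Fk lamP lamd c b 1 s) s := by
  have hE := exp_hasDeriv c s
  have hden : HasDerivAt (fun x : ℝ => lamd * (x - 1)) (lamd * 1) s :=
    ((hasDerivAt_id s).sub_const 1).const_mul lamd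
  have hdne : lamd * (s - 1) ≠ 0 := mul_ne_zero hlam hs
  have hdiv := (hE.sub_const 1).fun_div hden hdne
  have hfull := (((hE.const_mul b).sub_const K).fun_add hdiv).const_mul (2 * lamP)
  convert hfull using 1
  case e'_4 => rfl
  case e'_5 => rfl
  simp only [Fk, Finset.sum_range_succ, Finset.sum_range_zero]
  norm_num
  field_simp
  ring_nf
  tauto

/-- For `s ≠ 1`, the `k`-th derivative in `s` of
`g(s,t) = 2λP[ |t-a| e^{λd β(t)(s-1)} - (t+a) + (e^{λd(s-1)β(t)}-1)/(λd(s-1)) ]`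
equals
`2λP[ (λd β(t))^k |t-a| e^{(s-1)λd β(t)}
  + (1/λd)( Σ_{j=0}^{k} C(k,j) j! (-1)^j (s-1)^{-(j+1)} (λd β(t))^{k-j} e^{(s-1)λd β(t)}
    - k! (-1)^k (s-1)^{-(k+1)} ) ]`, with `β(t) = 2 min(t,a)`. -/
theorem stmt2 (lamP lamd a t : ℝ) (k : ℕ)
    (hP : 0 < lamP) (hd : 0 < lamd) (ha : 0 < a) (ht : 0 < t) (hk : 1 ≤ k)
    (s : ℝ) (hs : s ≠ 1) :
    iteratedDeriv k
      (fun s : ℝ => 2 * lamP * (|t - a| * Real.exp (lamd * (2 * min t a) * (s - 1))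
        - (t + a)
        + (Real.exp (lamd * (s - 1) * (2 * min t a)) - 1) / (lamd * (s - 1)))) s =
    2 * lamP * ((lamd * (2 * min t a)) ^ k * |t - a|
        * Real.exp ((s - 1) * lamd * (2 * min t a))
      + (1 / lamd) *
        ((∑ j ∈ Finset.range (k + 1),
            (Nat.choose k j : ℝ) * (Nat.factorial j : ℝ) * (-1) ^ j / (s - 1) ^ (j + 1)
              * (lamd * (2 * min t a)) ^ (k - j)
              * Real.exp ((s - 1) * lamd * (2 * min t a)))
          - (Nat.factorial k : ℝ) * (-1) ^ k / (s - 1) ^ (k + 1))) := by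
  have hlam : lamd ≠ 0 := ne_of_gt hd
  set c : ℝ := lamd * (2 * min t a) with hc
  have hg : (fun s : ℝ => 2 * lamP * (|t - a| * Real.exp (lamd * (2 * min t a) * (s - 1))
        - (t + a)
        + (Real.exp (lamd * (s - 1) * (2 * min t a)) - 1) / (lamd * (s - 1))))
      = (fun x : ℝ => 2 * lamP * (|t - a| * Real.exp ((x - 1) * c) - (t + a)
        + (Real.exp ((x - 1) * c) - 1) / (lamd * (x - 1)))) := by
    funext x; rw [hc]; ring_nf
  have main : ∀ m : ℕ, 1 ≤ m → ∀ x : ℝ, x ≠ 1 →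
      iteratedDeriv m (fun x : ℝ => 2 * lamP * (|t - a| * Real.exp ((x - 1) * c) - (t + a)
        + (Real.exp ((x - 1) * c) - 1) / (lamd * (x - 1)))) x
      = Fk lamP lamd c |t - a| m x := by
    intro m hm
    induction m, hm using Nat.le_induction with
    | base =>
      intro x hx
      rw [iteratedDeriv_one]
      exact (base lamP lamd c |t - a| (t + a) x (sub_ne_zero.mpr hx) hlam).deriv
    | succ n hn ih =>
      intro x hx
      rw [iteratedDeriv_succ]
      have hev : (iteratedDeriv n (fun x : ℝ => 2 * lamP * (|t - a| * Real.exp ((x - 1) * c)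
          - (t + a) + (Real.exp ((x - 1) * c) - 1) / (lamd * (x - 1)))))
          =ᶠ[nhds x] Fk lamP lamd c |t - a| n := by
        filter_upwards [isOpen_ne.mem_nhds hx] with y hy
        exact ih y hy
      rw [hev.deriv_eq]
      exact (step lamP lamd c |t - a| n x (sub_ne_zero.mpr hx)).deriv
  rw [hg, main k hk s hs]
  simp only [Fk, hc]
  ring_nf
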